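/- Let M be the 6×6 real matrix (1/480) · [[16, −3, −3, −10, 0, 0], [−3, 16, −3, 0, −10, 0], [−3, −3, 16, 0, 0, −10], [2, 14, 14, 70, 30, 30], [14, 2, 14, 30, 70, 30], [14, 14, 2, 30, 30, 70]]. Then the symmetric matrix (M + M^⊤)/2 is positive definite; equivalently, there exists λ > 0 such that ⟨M x, x⟩ ≥ λ ‖x‖² for all x ∈ ℝ⁶. -/

import Mathlib

/-- The local Gram matrix `⟨𝐍, 𝐍̃⟩_{L₂(𝐓)}/vol(𝐓)` from Section 3.3. -/
noncomputable def gramM : Matrix (Fin 6) (Fin 6) ℝ :=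
  (1 / 480 : ℝ) • !![16, -3, -3, -10, 0, 0;
                     -3, 16, -3, 0, -10, 0;
                     -3, -3, 16, 0, 0, -10;
                     2, 14, 14, 70, 30, 30;
                     14, 2, 14, 30, 70, 30;
                     14, 14, 2, 30, 30, 70]

@[simp]
private lemma cons_val_five' {α : Type*} {m : ℕ} (x : α) (u : Fin (m + 5) → α) :
    Matrix.vecCons x u 5 =
      Matrix.vecHead (Matrix.vecTail (Matrix.vecTail (Matrix.vecTail (Matrix.vecTail u)))) :=
  rfl

set_option maxHeartbeats 1000000 in
private lemma gram_key (x : Fin 6 → ℝ) :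
    dotProduct (gramM.mulVec x) x =
      (3/160) * (∑ i, x i ^ 2) + (1/960) *
        (14 * (x 0 - 3/7 * x 1 - 3/7 * x 2 - 4/7 * x 3 + x 4 + x 5) ^ 2
        + (80/7) * (x 1 - 3/4 * x 2 + 37/40 * x 3 - 7/40 * x 4 + 7/4 * x 5) ^ 2
        + 5 * (x 2 + 37/10 * x 3 + 37/10 * x 4 + 13/5 * x 5) ^ 2
        + (196/5) * (x 3 + 1/28 * x 4 + 1/28 * x 5) ^ 2
        + (783/20) * (x 4 + 1/29 * x 5) ^ 2
        + (1134/29) * (x 5) ^ 2) := by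
  simp [gramM, dotProduct, Matrix.mulVec, Fin.sum_univ_six,
    Matrix.vecHead, Matrix.vecTail]
  ring

private lemma gram_lb (x : Fin 6 → ℝ) :
    (3/160 : ℝ) * (∑ i, x i ^ 2) ≤ dotProduct (gramM.mulVec x) x := by
  rw [gram_key x]
  nlinarith [sq_nonneg (x 0 - 3/7 * x 1 - 3/7 * x 2 - 4/7 * x 3 + x 4 + x 5),
    sq_nonneg (x 1 - 3/4 * x 2 + 37/40 * x 3 - 7/40 * x 4 + 7/4 * x 5),
    sq_nonneg (x 2 + 37/10 * x 3 + 37/10 * x 4 + 13/5 * x 5),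
    sq_nonneg (x 3 + 1/28 * x 4 + 1/28 * x 5),
    sq_nonneg (x 4 + 1/29 * x 5), sq_nonneg (x 5)]

set_option maxHeartbeats 1000000 in
private lemma quad_eq (x : Fin 6 → ℝ) :
    dotProduct (star x) (((1 / 2 : ℝ) • (gramM + gramM.transpose)).mulVec x) =
      dotProduct (gramM.mulVec x) x := by
  simp [gramM, dotProduct, Matrix.mulVec, Fin.sum_univ_six,
    Matrix.transpose_apply, Matrix.vecHead, Matrix.vecTail]
  ring

theorem stmt16 :
    ((1 / 2 : ℝ) • (gramM + gramM.transpose)).PosDef ∧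
    ∃ lam : ℝ, 0 < lam ∧
      ∀ x : Fin 6 → ℝ, lam * (∑ i, x i ^ 2) ≤ dotProduct (gramM.mulVec x) x := by
  refine ⟨Matrix.PosDef.of_dotProduct_mulVec_pos ?_ ?_, 3/160, by norm_num, gram_lb⟩
  · have hct : ∀ A : Matrix (Fin 6) (Fin 6) ℝ, A.conjTranspose = A.transpose := fun A => by
      ext i j; simp [Matrix.conjTranspose_apply]
    show _ = _
    rw [Matrix.conjTranspose_smul, Matrix.conjTranspose_add, hct, hct,
      Matrix.transpose_transpose, star_trivial, add_comm gramM.transpose]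
  · intro x hx
    obtain ⟨i, hi⟩ := Function.ne_iff.mp hx
    have hsum : 0 < ∑ i, x i ^ 2 :=
      Finset.sum_pos' (fun j _ => sq_nonneg _) ⟨i, Finset.mem_univ i, lt_of_le_of_ne (sq_nonneg _) (Ne.symm (pow_ne_zero 2 hi))⟩
    calc (0 : ℝ) < (3/160) * ∑ i, x i ^ 2 := by positivity
      _ ≤ dotProduct (gramM.mulVec x) x := gram_lb x
      _ = _ := (quad_eq x).symm
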